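/- arXiv:1603.04641 — 12 statements merged into one kernel-verified Lean document; each statement's English description precedes it below -/
import Mathlib

section
/- Sequential composition of open games is well-defined on ∼-equivalence classes: if G ∼ G' and H ∼ H' then H ∘ G ∼ H' ∘ G'. -/
/-- An open game `(X,S) → (Y,R)`: a set of strategy profiles together with
play, coplay and best-response functions. -/
structure OpenGame (X S Y R : Type) : Type 1 where
  Strat : Type
  play : Strat → X → Y
  coplay : Strat → X → R → S
  best : X → (Y → R) → Strat → Strat → Prop

/-- The equivalence `∼` of open games: a bijection of strategy sets commuting with
play, coplay and best response. -/
def OpenGame.equivGame {X S Y R : Type} (G₁ G₂ : OpenGame X S Y R) : Prop :=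
  ∃ i : G₁.Strat ≃ G₂.Strat,
    (∀ σ x, G₁.play σ x = G₂.play (i σ) x) ∧
    (∀ σ x r, G₁.coplay σ x r = G₂.coplay (i σ) x r) ∧
    (∀ x k σ σ', G₁.best x k σ σ' ↔ G₂.best x k (i σ) (i σ'))

/-- Sequential composition of open games (diagrammatic order: `G.comp H = H ∘ G`). -/
def OpenGame.comp {X S Y R Z Q : Type} (G : OpenGame X S Y R) (H : OpenGame Y R Z Q) :
    OpenGame X S Z Q where
  Strat := G.Strat × H.Strat
  play p x := H.play p.2 (G.play p.1 x)
  coplay p x q := G.coplay p.1 x (H.coplay p.2 (G.play p.1 x) q)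
  best x k p p' :=
    G.best x (fun y => H.coplay p.2 y (k (H.play p.2 y))) p.1 p'.1 ∧
    H.best (G.play p.1 x) k p.2 p'.2

/-- The identity open game. -/
def OpenGame.idGame (X S : Type) : OpenGame X S X S where
  Strat := PUnit
  play _ x := x
  coplay _ _ s := s
  best _ _ _ _ := True

/-- The monoidal product of open games. -/
def OpenGame.tens {X₁ S₁ Y₁ R₁ X₂ S₂ Y₂ R₂ : Type}
    (G₁ : OpenGame X₁ S₁ Y₁ R₁) (G₂ : OpenGame X₂ S₂ Y₂ R₂) :
    OpenGame (X₁ × X₂) (S₁ × S₂) (Y₁ × Y₂) (R₁ × R₂) where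
  Strat := G₁.Strat × G₂.Strat
  play p x := (G₁.play p.1 x.1, G₂.play p.2 x.2)
  coplay p x r := (G₁.coplay p.1 x.1 r.1, G₂.coplay p.2 x.2 r.2)
  best x k p p' :=
    G₁.best x.1 (fun y₁ => (k (y₁, G₂.play p.2 x.2)).1) p.1 p'.1 ∧
    G₂.best x.2 (fun y₂ => (k (G₁.play p.1 x.1, y₂)).2) p.2 p'.2

/-- The strategically trivial open game determined by `f : X → Y` and `g : R → S`. -/
def OpenGame.lift {X S Y R : Type} (f : X → Y) (g : R → S) : OpenGame X S Y R where
  Strat := PUnit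
  play _ x := f x
  coplay _ _ r := g r
  best _ _ _ _ := True

/-- The counit open game `ε_X : (X,X) → (1,1)`. -/
def OpenGame.counit (X : Type) : OpenGame X X PUnit PUnit where
  Strat := PUnit
  play _ _ := PUnit.unit
  coplay _ x _ := x
  best _ _ _ _ := True

/-- sequential composition is well-defined on `∼`-classes. -/
theorem comp_well_defined {X S Y R Z Q : Type}
    (G G' : OpenGame X S Y R) (H H' : OpenGame Y R Z Q)
    (hG : G.equivGame G') (hH : H.equivGame H') :
    (G.comp H).equivGame (G'.comp H') := by
  obtain ⟨i, hip, hic, hib⟩ := hG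
  obtain ⟨j, hjp, hjc, hjb⟩ := hH
  refine ⟨Equiv.prodCongr i j, ?_, ?_, ?_⟩
  · intro σ x
    show H.play σ.2 (G.play σ.1 x) = H'.play (j σ.2) (G'.play (i σ.1) x)
    simp [OpenGame.comp, hip, hjp]
  · intro σ x r
    show G.coplay σ.1 x (H.coplay σ.2 (G.play σ.1 x) r) = G'.coplay (i σ.1) x (H'.coplay (j σ.2) (G'.play (i σ.1) x) r)
    simp [OpenGame.comp, hip, hic, hjc]
  · intro x k σ σ'
    obtain ⟨σ1, σ2⟩ := σ
    obtain ⟨σ1', σ2'⟩ := σ'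
    simp only [OpenGame.comp, Equiv.prodCongr_apply, Prod.map]
    show (G.best x (fun y => H.coplay σ2 y (k (H.play σ2 y))) σ1 σ1' ∧ H.best (G.play σ1 x) k σ2 σ2') ↔ (G'.best x (fun y => H'.coplay (j σ2) y (k (H'.play (j σ2) y))) (i σ1) (i σ1') ∧ H'.best (G'.play (i σ1) x) k (j σ2) (j σ2'))
    constructor
    · rintro ⟨h1, h2⟩
      constructor
      · rw [← hib]
        convert h1 using 2 with y
        simp [hjc, hjp]
      · rw [← hip, ← hjb]; exact h2
    · rintro ⟨h1, h2⟩
      constructor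
      · rw [hib]
        convert h1 using 2 with y
        simp [hjc, hjp]
      · rw [hjb, hip]; exact h2
end

section
/- Composition of open games up to ∼-equivalence is associative: for composable open games G, H, I, we have I ∘ (H ∘ G) ∼ (I ∘ H) ∘ G. -/
/-- composition is associative up to `∼`.
In categorical notation `I ∘ (H ∘ G) ∼ (I ∘ H) ∘ G`. -/
theorem comp_assoc {X S Y R Z Q W V : Type}
    (G : OpenGame X S Y R) (H : OpenGame Y R Z Q) (I : OpenGame Z Q W V) :
    ((G.comp H).comp I).equivGame (G.comp (H.comp I)) := by
  refine ⟨(Equiv.prodAssoc _ _ _), ?_, ?_, ?_⟩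
  · rintro ⟨⟨a,b⟩,c⟩ x; rfl
  · rintro ⟨⟨a,b⟩,c⟩ x r; rfl
  · rintro x k ⟨⟨a,b⟩,c⟩ ⟨⟨a',b'⟩,c'⟩
    simp [OpenGame.comp, Equiv.prodAssoc, and_assoc]
    exact Iff.rfl
end

section
/- The identity open game id_{(X,S)}, with singleton strategy set, play function P(*,x) = x, coplay C(*,x,s) = s, and best response relation always holding, is a two-sided identity for sequential composition of open games up to ∼-equivalence: for any open game G : (X,S) → (Y,R), G ∘ id_{(X,S)} ∼ G and id_{(Y,R)} ∘ G ∼ G. -/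
/-- the identity open game is a two-sided identity up to `∼`:
`G ∘ id_{(X,S)} ∼ G` and `id_{(Y,R)} ∘ G ∼ G`. -/
theorem id_comp_id {X S Y R : Type} (G : OpenGame X S Y R) :
    ((OpenGame.idGame X S).comp G).equivGame G ∧
    (G.comp (OpenGame.idGame Y R)).equivGame G := by
  constructor
  · exact ⟨⟨fun p => p.2, fun σ => (PUnit.unit, σ), fun p => rfl, fun σ => rfl⟩,
      fun σ x => rfl, fun σ x r => rfl,
      fun x k σ σ' => ⟨fun h => h.2, fun h => ⟨trivial, h⟩⟩⟩
  · exact ⟨⟨fun p => p.1, fun σ => (σ, PUnit.unit), fun p => rfl, fun σ => rfl⟩,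
      fun σ x => rfl, fun σ x r => rfl,
      fun x k σ σ' => ⟨fun h => h.1, fun h => ⟨h, trivial⟩⟩⟩
end

section
/- There is a category whose objects are pairs of sets (X,S) and whose morphisms (X,S) → (Y,R) are ∼-equivalence classes of open games, with composition induced by sequential composition of open games and identities given by the identity open games. -/
theorem OpenGame.equivGame_refl {X S Y R : Type} (G : OpenGame X S Y R) :
    G.equivGame G :=
  ⟨Equiv.refl _, fun _ _ => rfl, fun _ _ _ => rfl, fun _ _ _ _ => Iff.rfl⟩

theorem OpenGame.comp_congr {X S Y R Z Q : Type}
    {G₁ G₂ : OpenGame X S Y R} {H₁ H₂ : OpenGame Y R Z Q}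
    (hG : G₁.equivGame G₂) (hH : H₁.equivGame H₂) :
    (G₁.comp H₁).equivGame (G₂.comp H₂) := by
  obtain ⟨i, ip, ic, ib⟩ := hG
  obtain ⟨j, jp, jc, jb⟩ := hH
  refine ⟨Equiv.prodCongr i j, ?_, ?_, ?_⟩
  · intro σ x
    simp [OpenGame.comp, ip, jp]; rfl
  · intro σ x r
    simp [OpenGame.comp, ip, ic, jc]; rfl
  · rintro x k ⟨σ, τ⟩ ⟨σ', τ'⟩
    simp only [OpenGame.comp, Equiv.prodCongr_apply, Prod.map]
    show _ ↔ (G₂.best x (fun y => H₂.coplay (j τ) y (k (H₂.play (j τ) y))) (i σ) (i σ') ∧ H₂.best (G₂.play (i σ) x) k (j τ) (j τ'))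
    constructor
    · rintro ⟨h1, h2⟩
      refine ⟨?_, ?_⟩
      · have := (ib x (fun y => H₁.coplay τ y (k (H₁.play τ y))) σ σ').mp h1
        convert this using 2 with y
        rw [jc, jp]
      · rw [← ip]; exact (jb _ k τ τ').mp h2
    · rintro ⟨h1, h2⟩
      refine ⟨?_, ?_⟩
      · rw [ib]
        convert h1 using 2 with y
        rw [jc, jp]
      · rw [jb, ip]; exact h2

theorem OpenGame.id_comp_equiv {X S Y R : Type} (G : OpenGame X S Y R) :
    ((OpenGame.idGame X S).comp G).equivGame G := by
  refine ⟨Equiv.punitProd _, ?_, ?_, ?_⟩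
  · intro σ x; rfl
  · intro σ x r; rfl
  · intro x k σ σ'
    simp [OpenGame.comp, OpenGame.idGame]; rfl

theorem OpenGame.comp_id_equiv {X S Y R : Type} (G : OpenGame X S Y R) :
    (G.comp (OpenGame.idGame Y R)).equivGame G := by
  refine ⟨Equiv.prodPUnit _, ?_, ?_, ?_⟩
  · intro σ x; rfl
  · intro σ x r; rfl
  · intro x k σ σ'
    simp [OpenGame.comp, OpenGame.idGame]; rfl

theorem OpenGame.comp_assoc_equiv {X S Y R Z Q W V : Type}
    (G : OpenGame X S Y R) (H : OpenGame Y R Z Q) (K : OpenGame Z Q W V) :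
    ((G.comp H).comp K).equivGame (G.comp (H.comp K)) := by
  refine ⟨Equiv.prodAssoc _ _ _, ?_, ?_, ?_⟩
  · intro σ x; rfl
  · intro σ x r; rfl
  · intro x k σ σ'
    simp only [OpenGame.comp, Equiv.prodAssoc_apply]
    tauto

/-- there is a category whose objects are pairs of sets and whose
morphisms are `∼`-equivalence classes of open games, with composition induced by
sequential composition of open games and identities the identity open games. -/
theorem game_category :
    ∃ (comp : ∀ (X S Y R Z Q : Type),
        Quot (@OpenGame.equivGame X S Y R) → Quot (@OpenGame.equivGame Y R Z Q) →
        Quot (@OpenGame.equivGame X S Z Q))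
      (ident : ∀ (X S : Type), Quot (@OpenGame.equivGame X S X S)),
      (∀ (X S Y R Z Q : Type) (G : OpenGame X S Y R) (H : OpenGame Y R Z Q),
        comp X S Y R Z Q (Quot.mk _ G) (Quot.mk _ H) = Quot.mk _ (G.comp H)) ∧
      (∀ (X S : Type), ident X S = Quot.mk _ (OpenGame.idGame X S)) ∧
      (∀ (X S Y R : Type) (f : Quot (@OpenGame.equivGame X S Y R)),
        comp X S X S Y R (ident X S) f = f) ∧
      (∀ (X S Y R : Type) (f : Quot (@OpenGame.equivGame X S Y R)),
        comp X S Y R Y R f (ident Y R) = f) ∧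
      (∀ (X S Y R Z Q W V : Type)
        (f : Quot (@OpenGame.equivGame X S Y R))
        (g : Quot (@OpenGame.equivGame Y R Z Q))
        (h : Quot (@OpenGame.equivGame Z Q W V)),
        comp X S Z Q W V (comp X S Y R Z Q f g) h =
          comp X S Y R W V f (comp Y R Z Q W V g h)) := by
  refine ⟨fun X S Y R Z Q =>
      Quot.lift (fun G => Quot.lift (fun H => Quot.mk _ (G.comp H))
        (fun H₁ H₂ h => Quot.sound (OpenGame.comp_congr (OpenGame.equivGame_refl G) h)))
      (fun G₁ G₂ h => funext fun q => Quot.induction_on q fun H =>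
        Quot.sound (OpenGame.comp_congr h (OpenGame.equivGame_refl H))),
    fun X S => Quot.mk _ (OpenGame.idGame X S), fun _ _ _ _ _ _ _ _ => rfl,
    fun _ _ => rfl, ?_, ?_, ?_⟩
  · intro X S Y R f
    induction f using Quot.induction_on with
    | _ G => exact Quot.sound (OpenGame.id_comp_equiv G)
  · intro X S Y R f
    induction f using Quot.induction_on with
    | _ G => exact Quot.sound (OpenGame.comp_id_equiv G)
  · intro X S Y R Z Q W V f g h
    induction f using Quot.induction_on with
    | _ G =>
    induction g using Quot.induction_on with
    | _ H =>
    induction h using Quot.induction_on with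
    | _ K => exact Quot.sound (OpenGame.comp_assoc_equiv G H K)
end

section
/- The monoidal product ⊗ of open games is well-defined on ∼-equivalence classes: if G₁ ∼ G₁' and G₂ ∼ G₂' then G₁ ⊗ G₂ ∼ G₁' ⊗ G₂'. -/
/-- the monoidal product is well-defined on `∼`-classes. -/
theorem tens_well_defined {X₁ S₁ Y₁ R₁ X₂ S₂ Y₂ R₂ : Type}
    (G₁ G₁' : OpenGame X₁ S₁ Y₁ R₁) (G₂ G₂' : OpenGame X₂ S₂ Y₂ R₂)
    (h₁ : G₁.equivGame G₁') (h₂ : G₂.equivGame G₂') :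
    (G₁.tens G₂).equivGame (G₁'.tens G₂') := by
  obtain ⟨i₁, p₁, c₁, b₁⟩ := h₁
  obtain ⟨i₂, p₂, c₂, b₂⟩ := h₂
  refine ⟨Equiv.prodCongr i₁ i₂, ?_, ?_, ?_⟩
  · intro σ x; simp [OpenGame.tens, p₁, p₂]; exact ⟨rfl, rfl⟩
  · intro σ x r; simp [OpenGame.tens, c₁, c₂]; exact ⟨rfl, rfl⟩
  · rintro x k ⟨a,b⟩ ⟨a',b'⟩
    simp only [OpenGame.tens, Equiv.prodCongr_apply, Prod.map]
    rw [b₁, b₂, p₁, p₂]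
    exact Iff.rfl
end

section
/- The monoidal product of open games is a bifunctor up to ∼-equivalence: for composable open games G : (X,S) → (Y,R), H : (Y,R) → (Z,Q) and G' : (X',S') → (Y',R'), H' : (Y',R') → (Z',Q'), we have (H ∘ G) ⊗ (H' ∘ G') ∼ (H ⊗ H') ∘ (G ⊗ G'). -/
/-- the monoidal product is a bifunctor up to `∼` (interchange law):
`(H ∘ G) ⊗ (H' ∘ G') ∼ (H ⊗ H') ∘ (G ⊗ G')`. -/
theorem tens_bifunctor {X S Y R Z Q X' S' Y' R' Z' Q' : Type}
    (G : OpenGame X S Y R) (H : OpenGame Y R Z Q)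
    (G' : OpenGame X' S' Y' R') (H' : OpenGame Y' R' Z' Q') :
    ((G.comp H).tens (G'.comp H')).equivGame ((G.tens G').comp (H.tens H')) := by
  refine ⟨Equiv.prodProdProdComm _ _ _ _, fun σ x => rfl, fun σ x r => rfl, fun x k σ σ' => ?_⟩
  simp only [OpenGame.comp, OpenGame.tens, Equiv.prodProdProdComm]
  tauto
end

section
/- The assignment sending a pair of functions (f : X → Y, g : R → S) to the strategically trivial open game (f,g) : (X,S) → (Y,R) with play P(*,x) = f(x) and coplay C(*,x,r) = g(r), and best response always holding, defines a functor from Set × Set^op to the category of open games; that is, it preserves identities and composition up to ∼. -/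
/-- `(f,g) : (X,S) → (Y,R)` defines a functor `Set × Set^op → Game`:
it preserves identities and composition up to `∼`. -/
theorem lift_functor :
    (∀ (X S : Type),
      (OpenGame.lift (id : X → X) (id : S → S)).equivGame (OpenGame.idGame X S)) ∧
    (∀ (X S Y R Z Q : Type) (f : X → Y) (g : R → S) (f' : Y → Z) (g' : Q → R),
      ((OpenGame.lift f g).comp (OpenGame.lift f' g')).equivGame
        (OpenGame.lift (f' ∘ f) (g ∘ g'))) := by
  constructor
  · intro X S
    exact ⟨Equiv.refl _, fun _ _ => rfl, fun _ _ _ => rfl, fun _ _ _ _ => Iff.rfl⟩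
  · intro X S Y R Z Q f g f' g'
    exact ⟨Equiv.punitProd PUnit, fun _ _ => rfl, fun _ _ _ => rfl,
      fun _ _ _ _ => by simp [OpenGame.comp, OpenGame.lift]⟩
end

section
/- Counit law: for any function f : X → Y, the composite ε_Y ∘ ((f,id₁) ⊗ id_{(1,Y)}) of open games (X,Y) → (Y,Y) → (1,1) is ∼-equivalent to the composite ε_X ∘ (id_{(X,1)} ⊗ (id₁,f)) of open games (X,Y) → (X,X) → (1,1). -/
/-- the counit law.  Identifying `(X,Y)` with `(X,1) ⊗ (1,Y)` via the
implicit monoidal structure isomorphisms, `(f,id₁) ⊗ id_{(1,Y)} : (X,Y) → (Y,Y)`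
is the strategically trivial game with play `f` and coplay `id`, and
`id_{(X,1)} ⊗ (id₁,f) : (X,Y) → (X,X)` is the one with play `id` and coplay `f`.
Then `ε_Y ∘ ((f,id₁) ⊗ id_{(1,Y)}) ∼ ε_X ∘ (id_{(X,1)} ⊗ (id₁,f))`. -/
theorem counit_law (X Y : Type) (f : X → Y) :
    ((OpenGame.lift f (id : Y → Y)).comp (OpenGame.counit Y)).equivGame
      ((OpenGame.lift (id : X → X) f).comp (OpenGame.counit X)) := by
  exact ⟨Equiv.refl _, fun σ x => rfl, fun σ x r => rfl, fun x k σ σ' => Iff.rfl⟩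
end

section
/- For two players: the monoidal product D_{1,X₁} ⊗ D_{1,X₂} of two utility-maximising decisions, composed with the lifted outcome function and counit to form the scalar open game ε_{ℝ²} ∘ ((q,1) ⊗ id_{(1,ℝ²)}) ∘ (D_{1,X₁} ⊗ D_{1,X₂}), has best response relation B(*,*) satisfying: ((σ₁,σ₂),(σ₁',σ₂')) ∈ B(*,*) iff σ₁' maximises x ↦ (q(x,σ₂))₁ over X₁ and σ₂' maximises y ↦ (q(σ₁,y))₂ over X₂; hence its fixpoints are exactly the pure Nash equilibria of the 2-player normal-form game q : X₁ × X₂ → ℝ². -/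
/-- The utility-maximising decision `D_{1,X} : (1,1) → (X,ℝ)`. -/
def decision1 (X : Type) : OpenGame PUnit PUnit X ℝ where
  Strat := X
  play σ _ := σ
  coplay _ _ _ := PUnit.unit
  best _ k _ σ' := ∀ x, k x ≤ k σ'

/-- The scalar open game `ε_{ℝ²} ∘ ((q,1) ⊗ id_{(1,ℝ²)}) ∘ (D_{1,X₁} ⊗ D_{1,X₂})`. -/
def twoPlayerGame {X₁ X₂ : Type} (q : X₁ × X₂ → ℝ × ℝ) :
    OpenGame (PUnit × PUnit) (PUnit × PUnit) PUnit PUnit :=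
  (((decision1 X₁).tens (decision1 X₂)).comp
    (OpenGame.lift q (id : ℝ × ℝ → ℝ × ℝ))).comp (OpenGame.counit (ℝ × ℝ))

/-- the best response relation of the scalar open game built from
two decisions, the lifted outcome function `q` and the counit is exactly the
classical best response relation of the 2-player normal-form game `q`, and its
fixpoints are the pure Nash equilibria. -/
theorem twoPlayerGame_best_response (X₁ X₂ : Type)
    [Fintype X₁] [Nonempty X₁] [Fintype X₂] [Nonempty X₂]
    (q : X₁ × X₂ → ℝ × ℝ) :
    (∀ (x : PUnit × PUnit) (k : PUnit → PUnit)
      (σ σ' : (twoPlayerGame q).Strat),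
      (twoPlayerGame q).best x k σ σ' ↔
        ((∀ a : X₁, (q (a, σ.1.1.2)).1 ≤ (q (σ'.1.1.1, σ.1.1.2)).1) ∧
         (∀ b : X₂, (q (σ.1.1.1, b)).2 ≤ (q (σ.1.1.1, σ'.1.1.2)).2))) ∧
    (∀ (x : PUnit × PUnit) (k : PUnit → PUnit) (σ : (twoPlayerGame q).Strat),
      (twoPlayerGame q).best x k σ σ ↔
        ((∀ a : X₁, (q (a, σ.1.1.2)).1 ≤ (q (σ.1.1.1, σ.1.1.2)).1) ∧
         (∀ b : X₂, (q (σ.1.1.1, b)).2 ≤ (q (σ.1.1.1, σ.1.1.2)).2))) := by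
  constructor
  · intro x k σ σ'
    simp only [twoPlayerGame, OpenGame.comp, OpenGame.tens, OpenGame.lift,
      OpenGame.counit, decision1, and_true, true_and]
    rfl
  · intro x k σ
    simp only [twoPlayerGame, OpenGame.comp, OpenGame.tens, OpenGame.lift,
      OpenGame.counit, decision1, and_true, true_and]
    rfl
end

section
/- The open game D^Δ_{X,Y} := (id_{(X,1)} ⊗ D_{X,Y}) ∘ (Δ_X, 1) : (X,1) → (X × Y, ℝ) is, up to ∼-equivalence, given by: strategy set X → Y, play P(σ,x) = (x, σ(x)), trivial coplay, and (σ,σ') ∈ B(x,k) iff σ'(x) ∈ argmax_{y:Y} k(x,y). -/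
/-- The utility-maximising decision `D_{X,Y} : (X,1) → (Y,ℝ)`. -/
def decision (X Y : Type) : OpenGame X PUnit Y ℝ where
  Strat := X → Y
  play σ x := σ x
  coplay _ _ _ := PUnit.unit
  best x k _ σ' := ∀ y, k y ≤ k (σ' x)

/-- `D^Δ_{X,Y} = (id_{(X,1)} ⊗ D_{X,Y}) ∘ (Δ_X, 1) : (X,1) → (X × Y, ℝ)`
(with the implicit unitor `1 ⊗ ℝ ≅ ℝ` realised by a lifted function). -/
def decisionDelta (X Y : Type) : OpenGame X PUnit (X × Y) ℝ :=
  ((OpenGame.lift (fun x : X => (x, x)) (fun _ : PUnit × PUnit => PUnit.unit)).comp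
    ((OpenGame.idGame X PUnit).tens (decision X Y))).comp
    (OpenGame.lift (id : X × Y → X × Y) (fun r : ℝ => (PUnit.unit, r)))

/-- The explicit description of `D^Δ_{X,Y}`: strategies `X → Y`, play
`σ, x ↦ (x, σ x)`, trivial coplay, and `(σ,σ') ∈ B(x,k)` iff
`σ' x ∈ argmax_{y} k(x,y)`. -/
def decisionDeltaExplicit (X Y : Type) : OpenGame X PUnit (X × Y) ℝ where
  Strat := X → Y
  play σ x := (x, σ x)
  coplay _ _ _ := PUnit.unit
  best x k _ σ' := ∀ y : Y, k (x, y) ≤ k (x, σ' x)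

/-- `D^Δ_{X,Y}` is, up to `∼`, the explicitly described open game. -/
theorem decisionDelta_eq_explicit (X Y : Type) [Fintype Y] [Nonempty Y] :
    (decisionDelta X Y).equivGame (decisionDeltaExplicit X Y) := by
  refine ⟨{ toFun := fun p => p.1.2.2
            invFun := fun σ => ((PUnit.unit, (PUnit.unit, σ)), PUnit.unit)
            left_inv := fun p => rfl
            right_inv := fun σ => rfl }, ?_, ?_, ?_⟩
  · intro σ x; rfl
  · intro σ x r; rfl
  · intro x k σ σ'
    simp only [decisionDelta, decisionDeltaExplicit, OpenGame.comp, OpenGame.tens,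
      OpenGame.lift, OpenGame.idGame, decision]
    constructor
    · rintro ⟨⟨-, -, h⟩, -⟩ y; exact h y
    · intro h; exact ⟨⟨trivial, trivial, h⟩, trivial⟩
end

section
/- Two-player sequential game as an open game: the scalar open game obtained by composing D_{1,X}, the copying map, D_{X,Y}, the lifted outcome function q : X × Y → ℝ², and the counit ε_{ℝ²}, has strategy set X × (X → Y), and ((σ₁,σ₂),(σ₁',σ₂')) ∈ B(*,*) iff σ₁' ∈ argmax_{x:X} (q(x, σ₂(x)))₁ and σ₂'(σ₁) ∈ argmax_{y:Y} (q(σ₁, y))₂. In particular, its fixpoints are exactly the Nash equilibria of the 2-stage sequential game with outcome function q. -/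
/-- The scalar open game of the 2-player sequential game: compose `D_{1,X}`, the
copying map, `id_{(X,ℝ)} ⊗ D_{X,Y}`, the lifted outcome function `q` and the
counit `ε_{ℝ²}` (implicit unitors realised by lifted functions). -/
def seq2Game {X Y : Type} (q : X × Y → ℝ × ℝ) :
    OpenGame PUnit PUnit PUnit PUnit :=
  ((((decision1 X).comp
      (OpenGame.lift (fun x : X => (x, x)) (fun p : ℝ × PUnit => p.1))).comp
      ((OpenGame.idGame X ℝ).tens (decision X Y))).comp
      (OpenGame.lift q (id : ℝ × ℝ → ℝ × ℝ))).comp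
    (OpenGame.counit (ℝ × ℝ))

/-- Nash equilibrium of the 2-stage sequential game: `σ₁` maximises
`x ↦ (q(x,σ₂ x))₁` and `σ₂ σ₁` maximises `y ↦ (q(σ₁,y))₂`. -/
def seq2Nash {X Y : Type} (q : X × Y → ℝ × ℝ) (s₁ : X) (s₂ : X → Y) : Prop :=
  (∀ a : X, (q (a, s₂ a)).1 ≤ (q (s₁, s₂ s₁)).1) ∧
  (∀ y : Y, (q (s₁, y)).2 ≤ (q (s₁, s₂ s₁)).2)

/-- the 2-player sequential scalar open game has strategy set
`X × (X → Y)` (up to bijection), its best response relation is the classical one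
of the sequential game, and its fixpoints are exactly the Nash equilibria. -/
theorem seq2Game_best_response (X Y : Type)
    [Fintype X] [Nonempty X] [Fintype Y] [Nonempty Y]
    (q : X × Y → ℝ × ℝ) :
    Nonempty ((seq2Game q).Strat ≃ X × (X → Y)) ∧
    (∀ (x : PUnit) (k : PUnit → PUnit) (σ σ' : (seq2Game q).Strat),
      (seq2Game q).best x k σ σ' ↔
        ((∀ a : X, (q (a, σ.1.1.2.2 a)).1 ≤
            (q (σ'.1.1.1.1, σ.1.1.2.2 σ'.1.1.1.1)).1) ∧
         (∀ y : Y, (q (σ.1.1.1.1, y)).2 ≤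
            (q (σ.1.1.1.1, σ'.1.1.2.2 σ.1.1.1.1)).2))) ∧
    (∀ (x : PUnit) (k : PUnit → PUnit) (σ : (seq2Game q).Strat),
      (seq2Game q).best x k σ σ ↔ seq2Nash q σ.1.1.1.1 σ.1.1.2.2) := by
  refine ⟨⟨{ toFun := fun s => (s.1.1.1.1, s.1.1.2.2),
             invFun := fun p => ((((p.1, .unit), (.unit, p.2)), .unit), .unit),
             left_inv := fun s => rfl,
             right_inv := fun p => rfl }⟩, ?_, ?_⟩
  · intro x k σ σ'
    simp only [seq2Game, OpenGame.comp, OpenGame.counit, OpenGame.lift, OpenGame.tens,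
      OpenGame.idGame, decision1, decision, id_eq]
    exact ⟨fun h => ⟨h.1.1.1.1, h.1.1.2.2⟩,
           fun h => ⟨⟨⟨⟨h.1, trivial⟩, trivial, h.2⟩, trivial⟩, trivial⟩⟩
  · intro x k σ
    simp only [seq2Game, OpenGame.comp, OpenGame.counit, OpenGame.lift, OpenGame.tens,
      OpenGame.idGame, decision1, decision, id_eq]
    exact ⟨fun h => ⟨h.1.1.1.1, h.1.1.2.2⟩,
           fun h => ⟨⟨⟨⟨h.1, trivial⟩, trivial, h.2⟩, trivial⟩, trivial⟩⟩
end

section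
/- For the sequence of open games G_i : (1,1) → (∏_{j≤i} X_j, ℝ^i) defined recursively from decisions D_{∏_{j≤i} X_j, X_{i+1}} with copying and identity wires, the strategy set of G_n is ∏_{i=1}^n (∏_{j<i} X_j → X_i), the set of strategy profiles of the n-player sequential game, and for any q : ∏_{i=1}^n X_i → ℝⁿ, the relation B_{G_n}(*, q) is exactly the classical best response relation of the sequential game: (σ,σ') ∈ B_{G_n}(*,q) iff for each i, (P(σ[i ↦ σ'_i]))_i ∈ argmax_{x_i} (q(U_i(x_i,σ)))_i, where P is the play function producing the realized move sequence and U_i the unilateral deviation operator. -/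
variable {n : ℕ}

/-- The recursively defined sequence of open games
`G_i : (1,1) → (∏_{j≤i} X_j, ℝ^i)` of Definition 7 (Figure 4): `G_0` is the
identity on `(1,1)`, and `G_{i+1}` is obtained from `G_i` by copying its output,
feeding one copy to the decision `D_{∏_{j≤i} X_j, X_{i+1}}` (best response via
argmax of the continuation), and bundling the output and utility wires. -/
def seqGame (X : Fin n → Type) :
    ∀ (i : ℕ) (hi : i ≤ n),
      OpenGame PUnit PUnit ((j : Fin i) → X (Fin.castLE hi j)) (Fin i → ℝ)
  | 0, _ =>
    { Strat := PUnit
      play := fun _ _ => fun j => j.elim0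
      coplay := fun _ _ _ => PUnit.unit
      best := fun _ _ _ _ => True }
  | (i + 1), hi =>
    let G := seqGame X i (Nat.le_of_succ_le hi)
    { Strat := G.Strat ×
        (((j : Fin i) → X (Fin.castLE (Nat.le_of_succ_le hi) j)) → X ⟨i, hi⟩)
      play := fun p _ =>
        Fin.snoc (α := fun j : Fin (i + 1) => X (Fin.castLE hi j))
          (G.play p.1 PUnit.unit) (p.2 (G.play p.1 PUnit.unit))
      coplay := fun _ _ _ => PUnit.unit
      best := fun _ k p p' =>
        G.best PUnit.unit
          (fun h j => k
            (Fin.snoc (α := fun j : Fin (i + 1) => X (Fin.castLE hi j)) h (p.2 h))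
            (Fin.castSucc j))
          p.1 p'.1 ∧
        (∀ x : X ⟨i, hi⟩,
          k (Fin.snoc (α := fun j : Fin (i + 1) => X (Fin.castLE hi j))
              (G.play p.1 PUnit.unit) x) (Fin.last i) ≤
          k (Fin.snoc (α := fun j : Fin (i + 1) => X (Fin.castLE hi j))
              (G.play p.1 PUnit.unit) (p'.2 (G.play p.1 PUnit.unit)))
            (Fin.last i)) }

/-- Classical strategy profiles of the `n`-player sequential game: each player `i`
chooses a move contingent on the history of previous moves. -/
def SeqStrat (X : Fin n → Type) : Type :=
  ∀ i : Fin n, (((j : Fin i.val) → X (Fin.castLE (le_of_lt i.isLt) j)) → X i)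

/-- The play function by course-of-values recursion (auxiliary version producing
the realized moves of the first `i` players). -/
def playAux (X : Fin n → Type) (σ : SeqStrat X) :
    ∀ (i : ℕ) (hi : i ≤ n), (j : Fin i) → X (Fin.castLE hi j)
  | 0, _ => fun j => j.elim0
  | (i + 1), hi =>
    Fin.snoc (α := fun j : Fin (i + 1) => X (Fin.castLE hi j))
      (playAux X σ i (Nat.le_of_succ_le hi))
      (σ ⟨i, hi⟩ (playAux X σ i (Nat.le_of_succ_le hi)))

/-- The play function `P : Σ → ∏_{i} X_i` producing the realized move sequence. -/
def playSeq (X : Fin n → Type) (σ : SeqStrat X) : (j : Fin n) → X j :=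
  fun j => playAux X σ n le_rfl j

/-- The unilateral deviation operator `U_i : X_i × Σ → ∏_j X_j`: players before
`i` follow `σ`, player `i` plays `x`, players after `i` follow `σ` applied to the
realized history. -/
def udev (X : Fin n → Type) [DecidableEq (Fin n)] (i : Fin n) (x : X i)
    (σ : SeqStrat X) : (j : Fin n) → X j :=
  playSeq X (Function.update σ i (fun _ => x))

/-- The classical best response relation of the `n`-player sequential game with
outcome function `q`. -/
def seqBR (X : Fin n → Type) [DecidableEq (Fin n)]
    (q : ((j : Fin n) → X j) → Fin n → ℝ) (σ σ' : SeqStrat X) : Prop :=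
  ∀ i : Fin n, ∀ x : X i,
    (q (udev X i x σ)) i ≤
    (q (udev X i ((playSeq X (Function.update σ i (σ' i))) i) σ)) i

section Aux

variable {n : ℕ}

/-- Forward map from recursive strategies to dependent-function strategies. -/
def stratFun (X : Fin n → Type) :
    ∀ (i : ℕ) (hi : i ≤ n), (seqGame X i hi).Strat →
      ∀ j : Fin i, (((k : Fin j.val) →
        X (Fin.castLE (le_trans (le_of_lt j.isLt) hi) k)) → X (Fin.castLE hi j))
  | 0, _, _ => fun j => j.elim0
  | (i+1), hi, p =>
    Fin.snoc (α := fun j : Fin (i+1) =>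
        ((k : Fin j.val) → X (Fin.castLE (le_trans (le_of_lt j.isLt) hi) k)) →
          X (Fin.castLE hi j))
      (stratFun X i (Nat.le_of_succ_le hi) p.1) p.2

/-- Backward map. -/
def stratInv (X : Fin n → Type) :
    ∀ (i : ℕ) (hi : i ≤ n),
      (∀ j : Fin i, (((k : Fin j.val) →
        X (Fin.castLE (le_trans (le_of_lt j.isLt) hi) k)) → X (Fin.castLE hi j))) →
      (seqGame X i hi).Strat
  | 0, _, _ => PUnit.unit
  | (i+1), hi, τ =>
    (stratInv X i (Nat.le_of_succ_le hi) (fun j => τ j.castSucc), τ (Fin.last i))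

theorem stratInv_stratFun (X : Fin n → Type) :
    ∀ (i : ℕ) (hi : i ≤ n) (p : (seqGame X i hi).Strat),
      stratInv X i hi (stratFun X i hi p) = p
  | 0, _, _ => rfl
  | (i+1), hi, p => by
    show (stratInv X i (Nat.le_of_succ_le hi) (fun j =>
        Fin.snoc (α := fun j : Fin (i+1) =>
          ((k : Fin j.val) → X (Fin.castLE (le_trans (le_of_lt j.isLt) hi) k)) →
            X (Fin.castLE hi j))
          (stratFun X i (Nat.le_of_succ_le hi) p.1) p.2 j.castSucc),
        Fin.snoc (α := fun j : Fin (i+1) =>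
          ((k : Fin j.val) → X (Fin.castLE (le_trans (le_of_lt j.isLt) hi) k)) →
            X (Fin.castLE hi j))
          (stratFun X i (Nat.le_of_succ_le hi) p.1) p.2 (Fin.last i)) = p
    simp only [Fin.snoc_castSucc, Fin.snoc_last]
    rw [stratInv_stratFun X i (Nat.le_of_succ_le hi) p.1]
    rfl

theorem stratFun_stratInv (X : Fin n → Type) :
    ∀ (i : ℕ) (hi : i ≤ n) (τ : ∀ j : Fin i, (((k : Fin j.val) →
        X (Fin.castLE (le_trans (le_of_lt j.isLt) hi) k)) → X (Fin.castLE hi j))),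
      stratFun X i hi (stratInv X i hi τ) = τ
  | 0, _, τ => funext fun j => j.elim0
  | (i+1), hi, τ => by
    funext j
    induction j using Fin.lastCases with
    | last =>
      show Fin.snoc (α := fun j : Fin (i+1) =>
          ((k : Fin j.val) → X (Fin.castLE (le_trans (le_of_lt j.isLt) hi) k)) →
            X (Fin.castLE hi j))
        (stratFun X i (Nat.le_of_succ_le hi)
          (stratInv X i (Nat.le_of_succ_le hi) (fun j => τ j.castSucc)))
        (τ (Fin.last i)) (Fin.last i) = τ (Fin.last i)
      rw [Fin.snoc_last]
    | cast j =>
      show Fin.snoc (α := fun j : Fin (i+1) =>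
          ((k : Fin j.val) → X (Fin.castLE (le_trans (le_of_lt j.isLt) hi) k)) →
            X (Fin.castLE hi j))
        (stratFun X i (Nat.le_of_succ_le hi)
          (stratInv X i (Nat.le_of_succ_le hi) (fun j => τ j.castSucc)))
        (τ (Fin.last i)) j.castSucc = τ j.castSucc
      rw [Fin.snoc_castSucc,
        stratFun_stratInv X i (Nat.le_of_succ_le hi) (fun j => τ j.castSucc)]

theorem playAux_congr (X : Fin n → Type) (σ₁ σ₂ : SeqStrat X) :
    ∀ (i : ℕ) (hi : i ≤ n),
      (∀ j : Fin n, j.val < i → σ₁ j = σ₂ j) →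
      playAux X σ₁ i hi = playAux X σ₂ i hi
  | 0, _, _ => funext fun j => j.elim0
  | (i+1), hi, h => by
    have ih := playAux_congr X σ₁ σ₂ i (Nat.le_of_succ_le hi)
      (fun j hj => h j (Nat.lt_succ_of_lt hj))
    simp only [playAux]
    rw [ih, h ⟨i, hi⟩ (Nat.lt_succ_self i)]

theorem playAux_eval (X : Fin n → Type) (σ : SeqStrat X) :
    ∀ (i : ℕ) (hi : i ≤ n) (j : Fin i),
      playAux X σ i hi j =
        σ ⟨j.val, lt_of_lt_of_le j.isLt hi⟩
          (playAux X σ j.val (le_trans (le_of_lt j.isLt) hi))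
  | 0, _, j => j.elim0
  | (i+1), hi, j => by
    induction j using Fin.lastCases with
    | last => simp only [playAux, Fin.snoc_last]; rfl
    | cast j =>
      simp only [playAux, Fin.snoc_castSucc]
      exact playAux_eval X σ i (Nat.le_of_succ_le hi) j

theorem seqGame_play_eq (X : Fin n → Type) (σ : SeqStrat X) :
    ∀ (i : ℕ) (hi : i ≤ n) (p : (seqGame X i hi).Strat),
      (∀ j : Fin i, stratFun X i hi p j =
        σ ⟨j.val, lt_of_lt_of_le j.isLt hi⟩) →
      (seqGame X i hi).play p PUnit.unit = playAux X σ i hi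
  | 0, _, _, _ => funext fun j => j.elim0
  | (i+1), hi, p, hp => by
    have hii : i ≤ n := Nat.le_of_succ_le hi
    have hp1 : ∀ j : Fin i, stratFun X i hii p.1 j =
        σ ⟨j.val, lt_of_lt_of_le j.isLt hii⟩ := by
      intro j
      have e1 : stratFun X (i+1) hi p j.castSucc = stratFun X i hii p.1 j :=
        Fin.snoc_castSucc _ _ j
      exact e1.symm.trans (hp j.castSucc)
    have hlast : p.2 = σ ⟨i, hi⟩ := by
      have e2 : stratFun X (i+1) hi p (Fin.last i) = p.2 := Fin.snoc_last _ _
      exact e2.symm.trans (hp (Fin.last i))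
    have ih := seqGame_play_eq X σ i hii p.1 hp1
    show Fin.snoc (α := fun j : Fin (i + 1) => X (Fin.castLE hi j))
        ((seqGame X i hii).play p.1 PUnit.unit)
        (p.2 ((seqGame X i hii).play p.1 PUnit.unit)) = playAux X σ (i+1) hi
    simp only [playAux]
    rw [ih, hlast]

/-- Evaluating `playAux` at level `i+1` for a strategy updated at player `i`:
the first `i` players follow `σ`, player `i` plays according to the update. -/
theorem playAux_update_succ (X : Fin n → Type) (σ : SeqStrat X)
    (i : ℕ) (hi : i + 1 ≤ n)
    (f : ((l : Fin i) → X (Fin.castLE (Nat.le_of_succ_le hi) l)) → X ⟨i, hi⟩) :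
    playAux X (Function.update σ ⟨i, hi⟩ f) (i+1) hi =
      Fin.snoc (α := fun l : Fin (i + 1) => X (Fin.castLE hi l))
        (playAux X σ i (Nat.le_of_succ_le hi))
        (f (playAux X σ i (Nat.le_of_succ_le hi))) := by
  have h1 : playAux X (Function.update σ ⟨i, hi⟩ f) i (Nat.le_of_succ_le hi) =
      playAux X σ i (Nat.le_of_succ_le hi) :=
    playAux_congr X _ σ i (Nat.le_of_succ_le hi) (fun l hl =>
      Function.update_of_ne (Fin.ne_of_val_ne (Nat.ne_of_lt hl)) _ _)
  simp only [playAux, h1, Function.update_self]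
  erw [Function.update_self]

theorem best_iff (X : Fin n → Type) (σ σ' : SeqStrat X) :
    ∀ (i : ℕ) (hi : i ≤ n) (p p' : (seqGame X i hi).Strat),
      (∀ j : Fin i, stratFun X i hi p j = σ ⟨j.val, lt_of_lt_of_le j.isLt hi⟩) →
      (∀ j : Fin i, stratFun X i hi p' j = σ' ⟨j.val, lt_of_lt_of_le j.isLt hi⟩) →
      ∀ (k : ((j : Fin i) → X (Fin.castLE hi j)) → Fin i → ℝ),
      ((seqGame X i hi).best PUnit.unit k p p' ↔
        ∀ (j : Fin i) (x : X (Fin.castLE hi j)),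
          k (playAux X (Function.update σ ⟨j.val, lt_of_lt_of_le j.isLt hi⟩
              (fun _ => x)) i hi) j ≤
          k (playAux X (Function.update σ ⟨j.val, lt_of_lt_of_le j.isLt hi⟩
              (fun _ => σ' ⟨j.val, lt_of_lt_of_le j.isLt hi⟩
                (playAux X σ j.val (le_trans (le_of_lt j.isLt) hi)))) i hi) j)
  | 0, hi, p, p', _, _, k => by
    constructor
    · intro _ j; exact j.elim0
    · intro _; trivial
  | (i+1), hi, p, p', hp, hp', k => by
    have hii : i ≤ n := Nat.le_of_succ_le hi
    obtain ⟨p1, p2⟩ := p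
    obtain ⟨p1', p2'⟩ := p'
    have hp1 : ∀ j : Fin i, stratFun X i hii p1 j =
        σ ⟨j.val, lt_of_lt_of_le j.isLt hii⟩ := by
      intro j
      have e1 : stratFun X (i+1) hi (p1, p2) j.castSucc = stratFun X i hii p1 j :=
        Fin.snoc_castSucc _ _ j
      exact e1.symm.trans (hp j.castSucc)
    have hp'1 : ∀ j : Fin i, stratFun X i hii p1' j =
        σ' ⟨j.val, lt_of_lt_of_le j.isLt hii⟩ := by
      intro j
      have e1 : stratFun X (i+1) hi (p1', p2') j.castSucc = stratFun X i hii p1' j :=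
        Fin.snoc_castSucc _ _ j
      exact e1.symm.trans (hp' j.castSucc)
    have hlast : p2 = σ ⟨i, hi⟩ := by
      have e2 : stratFun X (i+1) hi (p1, p2) (Fin.last i) = p2 := Fin.snoc_last _ _
      exact e2.symm.trans (hp (Fin.last i))
    have hlast' : p2' = σ' ⟨i, hi⟩ := by
      have e2 : stratFun X (i+1) hi (p1', p2') (Fin.last i) = p2' := Fin.snoc_last _ _
      exact e2.symm.trans (hp' (Fin.last i))
    subst hlast
    subst hlast'
    have hplay : (seqGame X i hii).play p1 PUnit.unit = playAux X σ i hii :=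
      seqGame_play_eq X σ i hii p1 hp1
    have key : ∀ (j : Fin i)
        (f : ((l : Fin j.val) →
            X (Fin.castLE (le_trans (le_of_lt j.isLt) hii) l)) →
            X ⟨j.val, lt_of_lt_of_le j.isLt hii⟩),
        playAux X (Function.update σ ⟨j.val, lt_of_lt_of_le j.isLt hii⟩ f) (i+1) hi =
          Fin.snoc (α := fun l : Fin (i + 1) => X (Fin.castLE hi l))
            (playAux X (Function.update σ ⟨j.val, lt_of_lt_of_le j.isLt hii⟩ f) i hii)
            (σ ⟨i, hi⟩
              (playAux X (Function.update σ ⟨j.val, lt_of_lt_of_le j.isLt hii⟩ f) i hii)) := by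
      intro j f
      have hne : (⟨i, hi⟩ : Fin n) ≠ ⟨j.val, lt_of_lt_of_le j.isLt hii⟩ :=
        Fin.ne_of_val_ne (Nat.ne_of_lt j.isLt).symm
      simp only [playAux]
      erw [Function.update_of_ne hne]
    have ihiff := best_iff X σ σ' i hii p1 p1' hp1 hp'1
      (fun h l => k (Fin.snoc (α := fun l : Fin (i + 1) => X (Fin.castLE hi l))
        h (σ ⟨i, hi⟩ h)) l.castSucc)
    show ((seqGame X i hii).best PUnit.unit
        (fun h l => k (Fin.snoc (α := fun l : Fin (i + 1) => X (Fin.castLE hi l))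
          h (σ ⟨i, hi⟩ h)) l.castSucc) p1 p1' ∧
      (∀ x : X ⟨i, hi⟩,
        k (Fin.snoc (α := fun l : Fin (i + 1) => X (Fin.castLE hi l))
            ((seqGame X i hii).play p1 PUnit.unit) x) (Fin.last i) ≤
        k (Fin.snoc (α := fun l : Fin (i + 1) => X (Fin.castLE hi l))
            ((seqGame X i hii).play p1 PUnit.unit)
            (σ' ⟨i, hi⟩ ((seqGame X i hii).play p1 PUnit.unit))) (Fin.last i))) ↔ _
    rw [hplay, ihiff]
    constructor
    · rintro ⟨h1, h2⟩ j
      induction j using Fin.lastCases with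
      | last =>
        intro x
        show k (playAux X (Function.update σ ⟨i, hi⟩ (fun _ => x)) (i+1) hi)
            (Fin.last i) ≤
          k (playAux X (Function.update σ ⟨i, hi⟩
              (fun _ => σ' ⟨i, hi⟩ (playAux X σ i hii))) (i+1) hi) (Fin.last i)
        rw [playAux_update_succ X σ i hi (fun _ => x), playAux_update_succ X σ i hi]
        exact h2 x
      | cast j =>
        intro x
        show k (playAux X (Function.update σ ⟨j.val, lt_of_lt_of_le j.isLt hii⟩
            (fun _ => x)) (i+1) hi) j.castSucc ≤
          k (playAux X (Function.update σ ⟨j.val, lt_of_lt_of_le j.isLt hii⟩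
              (fun _ => σ' ⟨j.val, lt_of_lt_of_le j.isLt hii⟩
                (playAux X σ j.val (le_trans (le_of_lt j.isLt) hii)))) (i+1) hi)
            j.castSucc
        rw [key j (fun _ => x), key j]
        exact h1 j x
    · intro H
      constructor
      · intro j x
        have h3 : k (playAux X (Function.update σ ⟨j.val, lt_of_lt_of_le j.isLt hii⟩
            (fun _ => x)) (i+1) hi) j.castSucc ≤
          k (playAux X (Function.update σ ⟨j.val, lt_of_lt_of_le j.isLt hii⟩
              (fun _ => σ' ⟨j.val, lt_of_lt_of_le j.isLt hii⟩
                (playAux X σ j.val (le_trans (le_of_lt j.isLt) hii)))) (i+1) hi)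
            j.castSucc := H j.castSucc x
        rw [key j (fun _ => x), key j] at h3
        exact h3
      · intro x
        have h3 : k (playAux X (Function.update σ ⟨i, hi⟩ (fun _ => x)) (i+1) hi)
            (Fin.last i) ≤
          k (playAux X (Function.update σ ⟨i, hi⟩
              (fun _ => σ' ⟨i, hi⟩ (playAux X σ i hii))) (i+1) hi) (Fin.last i) :=
          H (Fin.last i) x
        rw [playAux_update_succ X σ i hi (fun _ => x),
          playAux_update_succ X σ i hi] at h3
        exact h3

end Aux

/-- the recursively defined open game `G_n` has as strategy
profiles exactly the strategy profiles of the `n`-player sequential game, and for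
every outcome function `q` its best response relation `B_{G_n}(*,q)` is the
classical best response relation of the sequential game, stated via an
equivalence of strategy sets commuting with the play functions. -/
theorem seqGame_best_response (X : Fin n → Type)
    [∀ i, Fintype (X i)] [∀ i, Nonempty (X i)]
    (q : ((j : Fin n) → X j) → Fin n → ℝ) :
    ∃ e : (seqGame X n le_rfl).Strat ≃ SeqStrat X,
      (∀ σ : (seqGame X n le_rfl).Strat,
        (seqGame X n le_rfl).play σ PUnit.unit = playSeq X (e σ)) ∧
      (∀ σ σ' : (seqGame X n le_rfl).Strat,
        (seqGame X n le_rfl).best PUnit.unit q σ σ' ↔ seqBR X q (e σ) (e σ')) := by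
  classical
  refine ⟨⟨stratFun X n le_rfl, stratInv X n le_rfl,
    stratInv_stratFun X n le_rfl, stratFun_stratInv X n le_rfl⟩, ?_, ?_⟩
  · intro p
    exact seqGame_play_eq X (stratFun X n le_rfl p) n le_rfl p (fun j => rfl)
  · intro p p'
    have hb : ∀ i : Fin n,
        playSeq X (Function.update (stratFun X n le_rfl p) i
          ((stratFun X n le_rfl p') i)) i =
        (stratFun X n le_rfl p') i
          (playAux X (stratFun X n le_rfl p) i.val
            (le_trans (le_of_lt i.isLt) le_rfl)) := by
      intro i
      show playAux X (Function.update (stratFun X n le_rfl p) i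
          ((stratFun X n le_rfl p') i)) n le_rfl i = _
      rw [playAux_eval X (Function.update (stratFun X n le_rfl p) i
          ((stratFun X n le_rfl p') i)) n le_rfl i]
      rw [playAux_congr X (Function.update (stratFun X n le_rfl p) i
            ((stratFun X n le_rfl p') i)) (stratFun X n le_rfl p) i.val
          (le_trans (le_of_lt i.isLt) le_rfl)
          (fun l hl => Function.update_of_ne (Fin.ne_of_val_ne (Nat.ne_of_lt hl)) _ _)]
      show Function.update (stratFun X n le_rfl p) i ((stratFun X n le_rfl p') i) i
          (playAux X (stratFun X n le_rfl p) i.val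
            (le_trans (le_of_lt i.isLt) le_rfl)) = _
      rw [Function.update_self]
    have main := best_iff X (stratFun X n le_rfl p) (stratFun X n le_rfl p')
      n le_rfl p p' (fun j => rfl) (fun j => rfl) q
    rw [main]
    constructor
    · intro H i x
      have h1 := H i x
      show q (playAux X (Function.update (stratFun X n le_rfl p) i
          (fun _ => x)) n le_rfl) i ≤
        q (playAux X (Function.update (stratFun X n le_rfl p) i
          (fun _ => playSeq X (Function.update (stratFun X n le_rfl p) i
            ((stratFun X n le_rfl p') i)) i)) n le_rfl) i
      rw [hb i]
      exact h1
    · intro H j x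
      have h1 : q (playAux X (Function.update (stratFun X n le_rfl p) j
          (fun _ => x)) n le_rfl) j ≤
        q (playAux X (Function.update (stratFun X n le_rfl p) j
          (fun _ => playSeq X (Function.update (stratFun X n le_rfl p) j
            ((stratFun X n le_rfl p') j)) j)) n le_rfl) j := H j x
      rw [hb j] at h1
      exact h1
end
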